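/- Eigenvalue perturbation via a Bauer–Fike-type bound for diagonalizable matrices: if A = V D V⁻¹ with D diagonal, and μ is an eigenvalue of A + E, then there exists a diagonal entry λ of D with |μ − λ| ≤ κ(V)·‖E‖, where κ(V) = ‖V‖·‖V⁻¹‖ in the operator norm. -/

import Mathlib

open scoped Matrix.Norms.L2Operator

open scoped Matrix

/-- Bauer–Fike-type bound for diagonalizable matrices: if `A = V D V⁻¹` with `D`
diagonal and `μ` is an eigenvalue of `A + E`, then some diagonal entry `λᵢ` of `D`
satisfies `|μ − λᵢ| ≤ ‖V‖·‖V⁻¹‖·‖E‖` (operator norm). -/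
theorem stmt_17 {n : ℕ} (A E V : Matrix (Fin n) (Fin n) ℂ) (dvec : Fin n → ℂ)
    (hV : IsUnit V) (hA : A = V * Matrix.diagonal dvec * V⁻¹)
    (μ : ℂ) (hμ : (A + E - μ • (1 : Matrix (Fin n) (Fin n) ℂ)).det = 0) :
    ∃ i : Fin n, ‖μ - dvec i‖ ≤ ‖V‖ * ‖V⁻¹‖ * ‖E‖ := by
  classical
  have hdet : IsUnit V.det := (Matrix.isUnit_iff_isUnit_det V).mp hV
  haveI := V.invertibleOfIsUnitDet hdet
  have hVV : V * V⁻¹ = 1 := Matrix.mul_nonsing_inv V hdet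
  have hVV' : V⁻¹ * V = 1 := Matrix.nonsing_inv_mul V hdet
  obtain ⟨x, hx0, hMx⟩ := Matrix.exists_mulVec_eq_zero_iff.mpr hμ
  set y : Fin n → ℂ := V⁻¹ *ᵥ x with hy
  have hxy : V *ᵥ y = x := by
    rw [hy, Matrix.mulVec_mulVec, hVV, Matrix.one_mulVec]
  have hy0 : y ≠ 0 := by
    intro h
    apply hx0
    rw [← hxy, h, Matrix.mulVec_zero]
  set d' : Fin n → ℂ := fun i => dvec i - μ with hd'
  set M : Matrix (Fin n) (Fin n) ℂ := A + E - μ • 1 with hM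
  -- key matrix identity
  have hN : V⁻¹ * M * V = Matrix.diagonal d' + V⁻¹ * E * V := by
    have hdd : Matrix.diagonal d' = Matrix.diagonal dvec - μ • 1 := by
      ext i j
      by_cases h : i = j <;>
        simp [h, Matrix.one_apply, Matrix.diagonal_apply, hd']
    rw [hM, hA, hdd]
    simp only [Matrix.mul_add, Matrix.add_mul, Matrix.mul_sub, Matrix.sub_mul,
      Matrix.mul_smul, Matrix.smul_mul, Matrix.mul_one, Matrix.one_mul, Matrix.mul_assoc,
      Matrix.inv_mul_cancel_left_of_invertible, Matrix.mul_inv_cancel_left_of_invertible,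
      hVV']
    abel
  have hNy : (Matrix.diagonal d' + V⁻¹ * E * V) *ᵥ y = 0 := by
    rw [← hN, ← Matrix.mulVec_mulVec, hxy, ← Matrix.mulVec_mulVec, hMx, Matrix.mulVec_zero]
  have hdy : Matrix.diagonal d' *ᵥ y = -((V⁻¹ * E * V) *ᵥ y) := by
    rw [Matrix.add_mulVec] at hNy
    linear_combination (norm := module) hNy
  -- pick index minimizing the distance
  haveI : Nonempty (Fin n) := by
    by_contra h
    exact hy0 (funext fun i => absurd ⟨i⟩ h)
  obtain ⟨i₀, -, hi₀⟩ := Finset.exists_min_image Finset.univ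
    (fun i => ‖μ - dvec i‖) ⟨Classical.arbitrary (Fin n), Finset.mem_univ _⟩
  refine ⟨i₀, ?_⟩
  set c : ℝ := ‖μ - dvec i₀‖ with hc
  have hc0 : 0 ≤ c := norm_nonneg _
  -- Euclidean-space versions
  set ye : EuclideanSpace ℂ (Fin n) := (EuclideanSpace.equiv (Fin n) ℂ).symm y with hye
  have hye0 : ‖ye‖ ≠ 0 := by
    simp only [ne_eq, norm_eq_zero]
    intro h
    apply hy0
    have := congrArg (EuclideanSpace.equiv (Fin n) ℂ) h
    simpa [hye] using this
  -- lower bound: c * ‖ye‖ ≤ ‖(diagonal d') *ᵥ y‖₂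
  have h1 : c * ‖ye‖ ≤ ‖(EuclideanSpace.equiv (Fin n) ℂ).symm (Matrix.diagonal d' *ᵥ y)‖ := by
    have hcoord : ∀ (v : Fin n → ℂ) (i : Fin n),
        ((EuclideanSpace.equiv (Fin n) ℂ).symm v) i = v i := fun _ _ => rfl
    rw [EuclideanSpace.norm_eq, EuclideanSpace.norm_eq]
    simp only [hye, hcoord, Matrix.mulVec_diagonal]
    rw [← Real.sqrt_sq hc0, ← Real.sqrt_mul (sq_nonneg c)]
    apply Real.sqrt_le_sqrt
    rw [Finset.mul_sum]
    apply Finset.sum_le_sum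
    intro i _
    rw [norm_mul, mul_pow]
    apply mul_le_mul_of_nonneg_right _ (sq_nonneg _)
    have : c ≤ ‖d' i‖ := by
      rw [hd', ← norm_neg]
      simpa [neg_sub] using hi₀ i (Finset.mem_univ i)
    exact pow_le_pow_left₀ hc0 this 2
  -- upper bound
  have h2 : ‖(EuclideanSpace.equiv (Fin n) ℂ).symm (Matrix.diagonal d' *ᵥ y)‖
      ≤ ‖V⁻¹ * E * V‖ * ‖ye‖ := by
    rw [hdy]
    calc ‖(EuclideanSpace.equiv (Fin n) ℂ).symm (-((V⁻¹ * E * V) *ᵥ y))‖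
        = ‖(EuclideanSpace.equiv (Fin n) ℂ).symm ((V⁻¹ * E * V) *ᵥ y)‖ := by
          rw [show (EuclideanSpace.equiv (Fin n) ℂ).symm (-((V⁻¹ * E * V) *ᵥ y))
              = -((EuclideanSpace.equiv (Fin n) ℂ).symm ((V⁻¹ * E * V) *ᵥ y)) from rfl,
            norm_neg]
      _ ≤ ‖V⁻¹ * E * V‖ * ‖ye‖ := Matrix.l2_opNorm_mulVec (V⁻¹ * E * V) ye
  have h3 : c * ‖ye‖ ≤ (‖V‖ * ‖V⁻¹‖ * ‖E‖) * ‖ye‖ := by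
    refine (h1.trans h2).trans ?_
    apply mul_le_mul_of_nonneg_right _ (norm_nonneg _)
    calc ‖V⁻¹ * E * V‖ ≤ ‖V⁻¹ * E‖ * ‖V‖ := Matrix.l2_opNorm_mul _ _
      _ ≤ ‖V⁻¹‖ * ‖E‖ * ‖V‖ :=
          mul_le_mul_of_nonneg_right (Matrix.l2_opNorm_mul _ _) (norm_nonneg _)
      _ = ‖V‖ * ‖V⁻¹‖ * ‖E‖ := by ring
  exact le_of_mul_le_mul_right (by simpa [mul_comm] using h3)
    (lt_of_le_of_ne (norm_nonneg ye) (Ne.symm hye0))
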